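/- The function I₁ = (v₀+1)(v₁+1)(v₂+1)(v₃+1)(v₄+1)/v₂ is a Casimir of the Poisson structure with matrix Ω having nonzero entries Ω₁₃ = (v₀+1)(v₂+1), Ω₁₄ = -(v₀+1)(v₃+1), Ω₁₅ = (v₀+1)(1/v₂+1)(v₄+1), Ω₂₄ = (v₁+1)(v₃+1), Ω₂₅ = -(v₁+1)(v₄+1), Ω₃₅ = (v₂+1)(v₄+1): Ω·(∇I₁)ᵀ = 0. -/
import Mathlib


open Matrix

/-- The structure matrix of the Lotka-Volterra (3,-2) reduction. -/
noncomputable def lvOmega (v : Fin 5 → ℝ) : Matrix (Fin 5) (Fin 5) ℝ :=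
  !![0, 0, (v 0 + 1)*(v 2 + 1), -((v 0 + 1)*(v 3 + 1)), (v 0 + 1)*(1/(v 2) + 1)*(v 4 + 1);
     0, 0, 0, (v 1 + 1)*(v 3 + 1), -((v 1 + 1)*(v 4 + 1));
     -((v 0 + 1)*(v 2 + 1)), 0, 0, 0, (v 2 + 1)*(v 4 + 1);
     (v 0 + 1)*(v 3 + 1), -((v 1 + 1)*(v 3 + 1)), 0, 0, 0;
     -((v 0 + 1)*(1/(v 2) + 1)*(v 4 + 1)), (v 1 + 1)*(v 4 + 1), -((v 2 + 1)*(v 4 + 1)), 0, 0]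

/-- The integral I₁ of the Lotka-Volterra reduction. -/
noncomputable def lvI1 (v : Fin 5 → ℝ) : ℝ :=
  (v 0 + 1) * (v 1 + 1) * (v 2 + 1) * (v 3 + 1) * (v 4 + 1) / v 2

/-- Gradient of a function on ℝ⁵ (vector of partial derivatives). -/
noncomputable def grad (f : (Fin 5 → ℝ) → ℝ) (v : Fin 5 → ℝ) : Fin 5 → ℝ :=
  fun l => deriv (fun t => f (Function.update v l t)) (v l)

lemma deriv_linear (a x : ℝ) : deriv (fun t => (t + 1) * a) x = a := by
  have : HasDerivAt (fun t : ℝ => (t + 1) * a) (1 * a) x :=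
    ((hasDerivAt_id x).add_const 1).mul_const a
  simpa using this.deriv

lemma grad_lvI1_0 (v : Fin 5 → ℝ) :
    grad lvI1 v 0 = (v 1 + 1) * (v 2 + 1) * (v 3 + 1) * (v 4 + 1) / v 2 := by
  have : (fun t => lvI1 (Function.update v 0 t))
      = fun t => (t + 1) * ((v 1 + 1) * (v 2 + 1) * (v 3 + 1) * (v 4 + 1) / v 2) := by
    funext t
    simp [lvI1, Function.update]
    ring
  rw [grad, this, deriv_linear]

lemma grad_lvI1_1 (v : Fin 5 → ℝ) :
    grad lvI1 v 1 = (v 0 + 1) * (v 2 + 1) * (v 3 + 1) * (v 4 + 1) / v 2 := by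
  have : (fun t => lvI1 (Function.update v 1 t))
      = fun t => (t + 1) * ((v 0 + 1) * (v 2 + 1) * (v 3 + 1) * (v 4 + 1) / v 2) := by
    funext t
    simp [lvI1, Function.update]
    ring
  rw [grad, this, deriv_linear]

lemma grad_lvI1_3 (v : Fin 5 → ℝ) :
    grad lvI1 v 3 = (v 0 + 1) * (v 1 + 1) * (v 2 + 1) * (v 4 + 1) / v 2 := by
  have : (fun t => lvI1 (Function.update v 3 t))
      = fun t => (t + 1) * ((v 0 + 1) * (v 1 + 1) * (v 2 + 1) * (v 4 + 1) / v 2) := by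
    funext t
    simp [lvI1, Function.update]
    ring
  rw [grad, this, deriv_linear]

lemma grad_lvI1_4 (v : Fin 5 → ℝ) :
    grad lvI1 v 4 = (v 0 + 1) * (v 1 + 1) * (v 2 + 1) * (v 3 + 1) / v 2 := by
  have : (fun t => lvI1 (Function.update v 4 t))
      = fun t => (t + 1) * ((v 0 + 1) * (v 1 + 1) * (v 2 + 1) * (v 3 + 1) / v 2) := by
    funext t
    simp [lvI1, Function.update]
    ring
  rw [grad, this, deriv_linear]

lemma grad_lvI1_2 (v : Fin 5 → ℝ) (h : v 2 ≠ 0) :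
    grad lvI1 v 2 = -((v 0 + 1) * (v 1 + 1) * (v 3 + 1) * (v 4 + 1)) / (v 2)^2 := by
  set C := (v 0 + 1) * (v 1 + 1) * (v 3 + 1) * (v 4 + 1) with hC
  have heq : (fun t => lvI1 (Function.update v 2 t)) = fun t => C * (t + 1) / t := by
    funext t
    simp [lvI1, Function.update, hC]
    ring
  have hd : HasDerivAt (fun t : ℝ => C * (t + 1) / t)
      ((C * 1 * v 2 - C * (v 2 + 1) * 1) / (v 2)^2) (v 2) := by
    exact (((hasDerivAt_id (v 2)).add_const 1).const_mul C).div (hasDerivAt_id (v 2)) h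
  rw [grad, heq, hd.deriv]
  field_simp
  ring

/-- I₁ is a Casimir of the Lotka-Volterra Poisson structure: Ω · ∇I₁ = 0. -/
theorem lvI1_casimir (v : Fin 5 → ℝ) (h : v 2 ≠ 0) :
    lvOmega v *ᵥ grad lvI1 v = 0 := by
  funext i
  fin_cases i <;>
  · simp [lvOmega, mulVec, dotProduct, Fin.sum_univ_five, grad_lvI1_0, grad_lvI1_1,
      grad_lvI1_2 v h, grad_lvI1_3, grad_lvI1_4]
    field_simp
    ring
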